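/- Let T be a bounded operator on H. If there exists a sequence {T_n}_{n∈ℕ} of diagonal operators on H such that P(T_n) = H for all n and ‖T_n − T‖ → 0 as n → ∞, then T is unitary (and T is itself diagonal). -/

import Mathlib

open scoped ComplexConjugate
open Filter

local notation "⟪" x ", " y "⟫" => @inner ℂ _ _ x y

/-- auxiliary: a diagonal operator with unimodular entries, applied with the adjoint. -/
lemma diag_adjoint_apply {H : Type*} [NormedAddCommGroup H] [InnerProductSpace ℂ H]
    [CompleteSpace H] (e : HilbertBasis ℕ ℂ H) (S : H →L[ℂ] H) (α : ℕ → ℂ)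
    (hS : ∀ j, S (e j) = α j • e j) (j : ℕ) :
    (ContinuousLinearMap.adjoint S) (e j) = conj (α j) • e j := by
  apply e.repr.injective
  ext i
  rw [e.repr_apply_apply, e.repr_apply_apply, ContinuousLinearMap.adjoint_inner_right,
    hS i, inner_smul_left, inner_smul_right]
  have := orthonormal_iff_ite.mp e.orthonormal i j
  rw [this]
  by_cases h : i = j <;> simp [h]

theorem unitary_of_limit_of_diagonal_with_all_points_periodic
    {H : Type*} [NormedAddCommGroup H] [InnerProductSpace ℂ H] [CompleteSpace H]
    (e : HilbertBasis ℕ ℂ H) (T : H →L[ℂ] H)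
    (h : ∃ Tn : ℕ → (H →L[ℂ] H),
      (∀ n, ∃ α : ℕ → ℂ, ∀ j, Tn n (e j) = α j • e j) ∧
      (∀ n, {x : H | ∃ m : ℕ, 0 < m ∧ ((Tn n) ^ m) x = x} = Set.univ) ∧
      Filter.Tendsto (fun n => ‖Tn n - T‖) Filter.atTop (nhds 0)) :
    T ∈ unitary (H →L[ℂ] H) ∧ ∃ α : ℕ → ℂ, ∀ n, T (e n) = α n • e n := by
  obtain ⟨Tn, hdiag, hper, hlim⟩ := h
  choose α hα using hdiag
  -- convergence in operator norm
  have hT : Tendsto Tn atTop (nhds T) := tendsto_iff_norm_sub_tendsto_zero.mpr hlim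
  have hej : ∀ j, e j ≠ 0 := fun j => by
    intro h0
    have := e.orthonormal.1 j
    rw [h0] at this; simp at this
  -- each entry has modulus 1
  have habs : ∀ n j, ‖α n j‖ = 1 := by
    intro n j
    have hmem : (e j : H) ∈ {x : H | ∃ m : ℕ, 0 < m ∧ ((Tn n) ^ m) x = x} := by
      rw [hper n]; trivial
    obtain ⟨m, hm, hfix⟩ := hmem
    have hpow : ∀ k : ℕ, ((Tn n) ^ k) (e j) = (α n j) ^ k • e j := by
      intro k
      induction k with
      | zero => simp
      | succ k ih =>
        rw [pow_succ, ContinuousLinearMap.mul_apply, hα n j, map_smul, ih,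
          smul_smul, pow_succ, mul_comm]
    have : (α n j) ^ m • e j = (1 : ℂ) • e j := by
      rw [← hpow, hfix, one_smul]
    have hα1 : (α n j) ^ m = 1 := smul_left_injective ℂ (hej j) this
    have : ‖α n j‖ ^ m = 1 := by
      rw [← norm_pow, hα1, norm_one]
    rcases (pow_eq_one_iff_cases.mp this) with h1 | h1 | h1
    · omega
    · exact h1
    · exfalso; nlinarith [norm_nonneg (α n j), h1.1]
  -- each Tn n is unitary
  have hstar : ∀ n, star (Tn n) * Tn n = 1 ∧ Tn n * star (Tn n) = 1 := by
    intro n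
    have hadj := diag_adjoint_apply e (Tn n) (α n) (hα n)
    have hnormsq : ∀ j, conj (α n j) * α n j = 1 := by
      intro j
      rw [Complex.conj_mul', habs n j]
      norm_num
    have hdense : Dense ((Submodule.span ℂ (Set.range e) : Submodule ℂ H) : Set H) := by
      rw [Submodule.dense_iff_topologicalClosure_eq_top]
      exact e.dense_span
    constructor
    · refine ContinuousLinearMap.ext_on hdense ?_
      rintro x ⟨j, rfl⟩
      rw [ContinuousLinearMap.mul_apply, ContinuousLinearMap.one_apply,
        ContinuousLinearMap.star_eq_adjoint, hα n j, map_smul, hadj j, smul_smul,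
        mul_comm, hnormsq j, one_smul]
    · refine ContinuousLinearMap.ext_on hdense ?_
      rintro x ⟨j, rfl⟩
      rw [ContinuousLinearMap.mul_apply, ContinuousLinearMap.one_apply,
        ContinuousLinearMap.star_eq_adjoint, hadj j, map_smul, hα n j, smul_smul,
        hnormsq j, one_smul]
  -- T is unitary: unitary group is closed under norm limits
  have hstarT : Tendsto (fun n => star (Tn n)) atTop (nhds (star T)) :=
    (continuous_star.tendsto T).comp hT
  have hmul1 : Tendsto (fun n => star (Tn n) * Tn n) atTop (nhds (star T * T)) :=
    hstarT.mul hT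
  have hmul2 : Tendsto (fun n => Tn n * star (Tn n)) atTop (nhds (T * star T)) :=
    hT.mul hstarT
  have h1 : star T * T = 1 := by
    have : Tendsto (fun _ : ℕ => (1 : H →L[ℂ] H)) atTop (nhds (star T * T)) := by
      refine hmul1.congr fun n => (hstar n).1
    exact tendsto_nhds_unique this tendsto_const_nhds
  have h2 : T * star T = 1 := by
    have : Tendsto (fun _ : ℕ => (1 : H →L[ℂ] H)) atTop (nhds (T * star T)) := by
      refine hmul2.congr fun n => (hstar n).2
    exact tendsto_nhds_unique this tendsto_const_nhds
  refine ⟨⟨h1, h2⟩, fun j => ⟪e j, T (e j)⟫, fun j => ?_⟩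
  -- diagonality of T
  have happly : Tendsto (fun n => Tn n (e j)) atTop (nhds (T (e j))) := by
    rw [tendsto_iff_norm_sub_tendsto_zero]
    have hb : ∀ n, ‖Tn n (e j) - T (e j)‖ ≤ ‖Tn n - T‖ := by
      intro n
      have := (Tn n - T).le_opNorm (e j)
      simpa [e.orthonormal.1 j] using this
    exact squeeze_zero (fun n => norm_nonneg _) hb hlim
  have hαlim : Tendsto (fun n => α n j) atTop (nhds ⟪e j, T (e j)⟫) := by
    have : Tendsto (fun n => ⟪(e j : H), Tn n (e j)⟫) atTop (nhds ⟪e j, T (e j)⟫) :=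
      (Continuous.tendsto (continuous_const.inner continuous_id) _).comp happly
    refine this.congr fun n => ?_
    rw [hα n j, inner_smul_right]
    simp [orthonormal_iff_ite.mp e.orthonormal j j, e.orthonormal.1 j]
  have : Tendsto (fun n => α n j • (e j : H)) atTop (nhds (⟪(e j : H), T (e j)⟫ • e j)) :=
    hαlim.smul tendsto_const_nhds
  have h' : Tendsto (fun n => Tn n (e j)) atTop (nhds (⟪(e j : H), T (e j)⟫ • e j)) :=
    this.congr fun n => (hα n j).symm
  exact tendsto_nhds_unique happly h'
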